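/- Lemma (relative interior commutes with scaled extension). Let U ⊂ ℝ^m and V ⊂ ℝ^n be nonempty bounded convex sets, and let h : ℝ^m → ℝ be an affine function h(u) = a·u + b that is nonnegative on U and strictly positive on relint U. Then relint(U ◁^h V) = (relint U) ◁^h (relint V). -/

import Mathlib

open Set Metric Filter

lemma mem_intrinsicInterior_iff' {E : Type*} [NormedAddCommGroup E] [NormedSpace ℝ E]
    {s : Set E} {x : E} :
    x ∈ intrinsicInterior ℝ s ↔
      x ∈ s ∧ ∃ ε > 0, ∀ y ∈ affineSpan ℝ s, dist y x < ε → y ∈ s := by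
  rw [mem_intrinsicInterior]
  constructor
  · rintro ⟨y, hy, rfl⟩
    have hys : (y : E) ∈ s := show y ∈ Subtype.val ⁻¹' s from interior_subset hy
    rw [mem_interior_iff_mem_nhds, Metric.mem_nhds_iff] at hy
    obtain ⟨ε, hε, hball⟩ := hy
    refine ⟨hys, ε, hε, fun y' hy' hd => ?_⟩
    have : (⟨y', hy'⟩ : affineSpan ℝ s) ∈ Metric.ball y ε := by
      simpa [Metric.mem_ball, Subtype.dist_eq] using hd
    exact hball this
  · rintro ⟨hxs, ε, hε, hb⟩
    have hx : x ∈ affineSpan ℝ s := subset_affineSpan ℝ s hxs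
    refine ⟨⟨x, hx⟩, ?_, rfl⟩
    rw [mem_interior_iff_mem_nhds, Metric.mem_nhds_iff]
    refine ⟨ε, hε, fun y hy => ?_⟩
    rw [Metric.mem_ball, Subtype.dist_eq] at hy
    exact hb y y.2 hy



/-- **Relative interior commutes with scaled extension.** For nonempty bounded convex sets
`U ⊆ ℝ^m`, `V ⊆ ℝ^n` and an affine `h` nonnegative on `U` and strictly positive on
`relint U`, one has `relint (U ◁^h V) = (relint U) ◁^h (relint V)`. -/
theorem relint_scaledExtension
    {m n : ℕ}
    (U : Set (Fin m → ℝ)) (V : Set (Fin n → ℝ))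
    (hUne : U.Nonempty) (hVne : V.Nonempty)
    (hUb : Bornology.IsBounded U) (hVb : Bornology.IsBounded V)
    (hUconv : Convex ℝ U) (hVconv : Convex ℝ V)
    (h : (Fin m → ℝ) →ᵃ[ℝ] ℝ)
    (hh0 : ∀ u ∈ U, 0 ≤ h u)
    (hhpos : ∀ u ∈ intrinsicInterior ℝ U, 0 < h u) :
    intrinsicInterior ℝ
        {z : (Fin m → ℝ) × (Fin n → ℝ) | ∃ u ∈ U, ∃ v ∈ V, z = (u, h u • v)}
      = {z : (Fin m → ℝ) × (Fin n → ℝ) |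
          ∃ u ∈ intrinsicInterior ℝ U, ∃ v ∈ intrinsicInterior ℝ V, z = (u, h u • v)} := by
  set W : Set ((Fin m → ℝ) × (Fin n → ℝ)) :=
    {z | ∃ u ∈ U, ∃ v ∈ V, z = (u, h u • v)} with hWdef
  have hCont : Continuous h := h.continuous_of_finiteDimensional
  ext z
  constructor
  · -- relint W ⊆ RHS
    intro hz
    rw [mem_intrinsicInterior_iff'] at hz
    obtain ⟨hzW, ε, hε, hball⟩ := hz
    obtain ⟨u, hu, vb, hvb, rfl⟩ := hzW
    -- the affine map u' ↦ (u', h u' • vb)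
    set φ : (Fin m → ℝ) →ᵃ[ℝ] ((Fin m → ℝ) × (Fin n → ℝ)) :=
      { toFun := fun u' => (u', h u' • vb)
        linear := (LinearMap.id).prod ((LinearMap.toSpanSingleton ℝ _ vb).comp h.linear)
        map_vadd' := by
          intro p q
          have hq : h (q + p) = h.linear q + h p := by
            simpa [vadd_eq_add] using h.map_vadd p q
          ext i <;>
            simp [LinearMap.toSpanSingleton, hq, vadd_eq_add, add_smul, add_mul,
              Prod.ext_iff, LinearMap.smulRight] } with hφdef
    have hφ : ∀ u', φ u' = (u', h u' • vb) := fun _ => rfl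
    have hφspan : ∀ u' ∈ affineSpan ℝ U, φ u' ∈ affineSpan ℝ W := by
      intro u' hu'
      have hle : (affineSpan ℝ U).map φ ≤ affineSpan ℝ W := by
        rw [AffineSubspace.map_span]
        refine affineSpan_mono ℝ ?_
        rintro _ ⟨u₁, hu₁, rfl⟩
        exact ⟨u₁, hu₁, vb, hvb, rfl⟩
      exact hle (AffineSubspace.mem_map.mpr ⟨u', hu', rfl⟩)
    have hφcont : ContinuousAt φ u := φ.continuous_of_finiteDimensional.continuousAt
    obtain ⟨δ₁, hδ₁, hδ₁ball⟩ := Metric.eventually_nhds_iff.mp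
      ((Metric.tendsto_nhds.mp hφcont) ε hε)
    have huri : u ∈ intrinsicInterior ℝ U := by
      rw [mem_intrinsicInterior_iff']
      refine ⟨hu, δ₁, hδ₁, fun u' hu' hd => ?_⟩
      have hmem : φ u' ∈ W := hball (φ u') (hφspan u' hu') (by
        have := hδ₁ball hd
        simpa [hφ] using this)
      obtain ⟨u₂, hu₂, v₂, hv₂, heq⟩ := hmem
      have : u' = u₂ := congrArg Prod.fst heq
      exact this ▸ hu₂
    have hu0 : 0 < h u := hhpos u huri
    -- the affine map v' ↦ (u, h u • v')
    set ψ : (Fin n → ℝ) →ᵃ[ℝ] ((Fin m → ℝ) × (Fin n → ℝ)) :=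
      { toFun := fun v' => (u, h u • v')
        linear := (0 : (Fin n → ℝ) →ₗ[ℝ] (Fin m → ℝ)).prod (h u • LinearMap.id)
        map_vadd' := by
          intro p q
          ext i <;> simp [vadd_eq_add, smul_add, mul_add, Prod.ext_iff] } with hψdef
    have hψ : ∀ v', ψ v' = (u, h u • v') := fun _ => rfl
    have hψspan : ∀ v' ∈ affineSpan ℝ V, ψ v' ∈ affineSpan ℝ W := by
      intro v' hv'
      have hle : (affineSpan ℝ V).map ψ ≤ affineSpan ℝ W := by
        rw [AffineSubspace.map_span]
        refine affineSpan_mono ℝ ?_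
        rintro _ ⟨v₁, hv₁, rfl⟩
        exact ⟨u, hu, v₁, hv₁, rfl⟩
      exact hle (AffineSubspace.mem_map.mpr ⟨v', hv', rfl⟩)
    have hψcont : ContinuousAt ψ vb := ψ.continuous_of_finiteDimensional.continuousAt
    obtain ⟨δ₂, hδ₂, hδ₂ball⟩ := Metric.eventually_nhds_iff.mp
      ((Metric.tendsto_nhds.mp hψcont) ε hε)
    have hvri : vb ∈ intrinsicInterior ℝ V := by
      rw [mem_intrinsicInterior_iff']
      refine ⟨hvb, δ₂, hδ₂, fun v' hv' hd => ?_⟩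
      have hmem : ψ v' ∈ W := hball (ψ v') (hψspan v' hv') (by
        have := hδ₂ball hd
        simpa [hψ] using this)
      obtain ⟨u₂, hu₂, v₂, hv₂, heq⟩ := hmem
      have h1 : u = u₂ := congrArg Prod.fst heq
      have h2 : h u • v' = h u₂ • v₂ := congrArg Prod.snd heq
      rw [← h1] at h2
      have : v' = v₂ := smul_right_injective _ (ne_of_gt hu0) h2
      exact this ▸ hv₂
    exact ⟨u, huri, vb, hvri, rfl⟩
  · -- RHS ⊆ relint W
    rintro ⟨u, huri, v, hvri, rfl⟩
    have hu0 : 0 < h u := hhpos u huri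
    rw [mem_intrinsicInterior_iff'] at huri hvri
    obtain ⟨huU, ε₁, hε₁, hUball⟩ := huri
    obtain ⟨hvV, ε₂, hε₂, hVball⟩ := hvri
    -- affine subspace M containing affineSpan W
    set f2 : ((Fin m → ℝ) × (Fin n → ℝ)) →ᵃ[ℝ] (Fin n → ℝ) :=
      { toFun := fun p => p.2 - h p.1 • v
        linear := (LinearMap.snd ℝ _ _) -
          (LinearMap.toSpanSingleton ℝ _ v).comp (h.linear.comp (LinearMap.fst ℝ _ _))
        map_vadd' := by
          intro p q
          have := h.map_vadd p.1 q.1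
          simp only [vadd_eq_add] at this ⊢
          ext i
          simp [this, LinearMap.toSpanSingleton, LinearMap.smulRight, add_smul]
          ring } with hf2def
    have hf2 : ∀ p : (Fin m → ℝ) × (Fin n → ℝ), f2 p = p.2 - h p.1 • v := fun _ => rfl
    set M : AffineSubspace ℝ ((Fin m → ℝ) × (Fin n → ℝ)) :=
      ((affineSpan ℝ U).comap (AffineMap.fst (k := ℝ))) ⊓
        (((affineSpan ℝ V).direction.toAffineSubspace).comap f2) with hMdef
    have hWM : affineSpan ℝ W ≤ M := by
      apply affineSpan_le.mpr
      rintro _ ⟨u₁, hu₁, v₁, hv₁, rfl⟩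
      refine ⟨subset_affineSpan ℝ U hu₁, ?_⟩
      show f2 (u₁, h u₁ • v₁) ∈ (affineSpan ℝ V).direction.toAffineSubspace
      rw [Submodule.mem_toAffineSubspace, hf2]
      have : h u₁ • v₁ - h u₁ • v = h u₁ • (v₁ - v) := by rw [smul_sub]
      rw [this]
      exact Submodule.smul_mem _ _
        (AffineSubspace.vsub_mem_direction (subset_affineSpan ℝ V hv₁) (subset_affineSpan ℝ V hvV))
    -- continuity data
    have hg : ContinuousAt (fun p : (Fin m → ℝ) × (Fin n → ℝ) => (h p.1)⁻¹ • p.2)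
        (u, h u • v) := by
      refine ContinuousAt.smul (ContinuousAt.inv₀ (?_ : ContinuousAt (fun p : (Fin m → ℝ) × (Fin n → ℝ) => h p.1) (u, h u • v)) (ne_of_gt hu0)) continuous_snd.continuousAt
      exact (hCont.comp continuous_fst).continuousAt
    have h1 : ∀ᶠ p : (Fin m → ℝ) × (Fin n → ℝ) in nhds (u, h u • v), 0 < h p.1 :=
      (hCont.comp continuous_fst).continuousAt.eventually (eventually_gt_nhds hu0)
    have h2 : ∀ᶠ p : (Fin m → ℝ) × (Fin n → ℝ) in nhds (u, h u • v),
        dist ((h p.1)⁻¹ • p.2) v < ε₂ := by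
      have hg2 : Filter.Tendsto (fun p : (Fin m → ℝ) × (Fin n → ℝ) => (h p.1)⁻¹ • p.2)
          (nhds (u, h u • v)) (nhds v) := by
        have := hg
        rw [ContinuousAt] at this
        simpa [inv_smul_smul₀ (ne_of_gt hu0)] using this
      exact Metric.tendsto_nhds.mp hg2 ε₂ hε₂
    obtain ⟨δ, hδ, hδball⟩ := Metric.eventually_nhds_iff.mp (h1.and h2)
    rw [mem_intrinsicInterior_iff']
    refine ⟨⟨u, huU, v, hvV, rfl⟩, min δ ε₁, lt_min hδ hε₁, ?_⟩
    rintro ⟨u', w'⟩ hspan hdist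
    have hM := hWM hspan
    obtain ⟨hMu, hMw⟩ := hM
    have hMu' : u' ∈ affineSpan ℝ U := hMu
    have hMw' : w' - h u' • v ∈ (affineSpan ℝ V).direction := hMw
    have hd1 : dist u' u ≤ dist ((u', w')) ((u, h u • v)) := by
      rw [Prod.dist_eq]; exact le_max_left _ _
    have hu'U : u' ∈ U :=
      hUball u' hMu' (lt_of_le_of_lt hd1 (lt_of_lt_of_le hdist (min_le_right _ _)))
    obtain ⟨hpos, hdv⟩ := hδball (lt_of_lt_of_le hdist (min_le_left _ _))
    set v' := (h u')⁻¹ • w' with hv'def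
    have hv'span : v' ∈ affineSpan ℝ V := by
      have heq : v' = ((h u')⁻¹ • (w' - h u' • v)) +ᵥ v := by
        rw [vadd_eq_add, smul_sub, smul_smul, inv_mul_cancel₀ (ne_of_gt hpos), one_smul]
        abel
      rw [heq]
      exact AffineSubspace.vadd_mem_of_mem_direction
        (Submodule.smul_mem _ _ hMw') (subset_affineSpan ℝ V hvV)
    have hv'V : v' ∈ V := hVball v' hv'span hdv
    refine ⟨u', hu'U, v', hv'V, ?_⟩
    have : h u' • v' = w' := by
      rw [hv'def, smul_smul, mul_inv_cancel₀ (ne_of_gt hpos), one_smul]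
    rw [this]
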